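/- arXiv:math/0609253 — 4 statements merged into one kernel-verified Lean document; each statement's English description precedes it below -/
import Mathlib

section
/- Let p be a prime number and K a field of characteristic 0 or p. For i = 1, …, n let f_i ∈ K[x₁, …, x_n] be a polynomial lying in K[x₁^p, …, x_{i−1}^p, x_i, x_{i+1}^p, …, x_n^p] but not in K[x₁^p, x₂^p, …, x_n^p]. Then the Jacobian determinant det(∂f_i/∂x_j) is a non-zero polynomial; in particular f₁, …, f_n are algebraically independent over K. -/
noncomputable section

open MvPolynomial Finset
namespace Stmt10

variable {n : ℕ} {K : Type*} [CommRing K]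

lemma coeff_pderiv (g : MvPolynomial (Fin n) K) (j : Fin n) (μ : Fin n →₀ ℕ) :
    coeff μ (pderiv j g) = coeff (μ + Finsupp.single j 1) g * ((μ j : K) + 1) := by
  induction g using MvPolynomial.induction_on' with
  | monomial m c =>
    rw [pderiv_monomial, coeff_monomial, coeff_monomial]
    by_cases h : m = μ + Finsupp.single j 1
    · subst h
      rw [if_pos (add_tsub_cancel_right ..), if_pos rfl]
      simp
    · rw [if_neg h]
      by_cases h0 : m j = 0
      · by_cases h2 : m - Finsupp.single j 1 = μ
        · rw [if_pos h2]; simp [h0]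
        · rw [if_neg h2]; ring
      · have h2 : m - Finsupp.single j 1 ≠ μ := by
          intro he
          apply h
          rw [← he]
          ext k
          simp only [Finsupp.add_apply, Finsupp.tsub_apply, Finsupp.single_apply]
          by_cases hk : j = k
          · subst hk; simp; omega
          · simp [hk]
        rw [if_neg h2]; ring
  | add a b ha hb => simp [map_add, coeff_add, ha, hb]; ring

lemma coeff_prod {ι : Type*} [DecidableEq ι] (s : Finset ι) (g : ι → MvPolynomial (Fin n) K) (μ : Fin n →₀ ℕ) :
    coeff μ (∏ i ∈ s, g i) = ∑ d ∈ s.finsuppAntidiag μ, ∏ i ∈ s, coeff (d i) (g i) := by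
  classical
  have hc : ((∏ i ∈ s, g i : MvPolynomial (Fin n) K) : MvPowerSeries (Fin n) K)
      = ∏ i ∈ s, ((g i : MvPolynomial (Fin n) K) : MvPowerSeries (Fin n) K) :=
    map_prod (MvPolynomial.coeToMvPowerSeries.ringHom) _ _
  have := MvPowerSeries.coeff_prod (fun i => ((g i : MvPolynomial (Fin n) K) : MvPowerSeries (Fin n) K)) μ s
  rw [← hc, MvPolynomial.coeff_coe] at this
  simpa only [MvPolynomial.coeff_coe] using this


variable {n : ℕ} {K : Type*} [Field K]

/-- The subalgebra of polynomials all of whose monomials have `j`-th exponent divisible by `p`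
for every `j` outside `s`. -/
def dvdSub (p : ℕ) (s : Set (Fin n)) : Subalgebra K (MvPolynomial (Fin n) K) where
  carrier := {g | ∀ m ∈ g.support, ∀ j, j ∉ s → p ∣ m j}
  mul_mem' := by
    classical
    intro a b ha hb m hm j hj
    obtain ⟨u, hu, v, hv, rfl⟩ := Finset.mem_add.mp (MvPolynomial.support_mul a b hm)
    exact Finsupp.add_apply u v j ▸ dvd_add (ha u hu j hj) (hb v hv j hj)
  add_mem' := by
    intro a b ha hb m hm j hj
    rcases Finset.mem_union.mp (MvPolynomial.support_add hm) with h | h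
    · exact ha m h j hj
    · exact hb m h j hj
  algebraMap_mem' := by
    intro c m hm j hj
    have hm0 : m = 0 := by
      by_contra h
      exact MvPolynomial.mem_support_iff.mp hm
        (by rw [MvPolynomial.algebraMap_eq, MvPolynomial.coeff_C, if_neg (Ne.symm h)])
    simp [hm0]

lemma support_dvd_of_mem_adjoin {p : ℕ} {i : Fin n} {g : MvPolynomial (Fin n) K}
    (hg : g ∈ Algebra.adjoin K
      ({MvPolynomial.X i} ∪
        {q : MvPolynomial (Fin n) K | ∃ j, j ≠ i ∧ q = MvPolynomial.X j ^ p})) :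
    ∀ m ∈ g.support, ∀ j, j ≠ i → p ∣ m j := by
  classical
  have : Algebra.adjoin K
      ({MvPolynomial.X i} ∪
        {q : MvPolynomial (Fin n) K | ∃ j, j ≠ i ∧ q = MvPolynomial.X j ^ p})
      ≤ dvdSub (K := K) p {i} := by
    rw [Algebra.adjoin_le_iff]
    rintro q (rfl | ⟨j, hj, rfl⟩)
    · intro m hm k hk
      rw [MvPolynomial.support_X] at hm
      simp only [Finset.mem_singleton] at hm
      subst hm
      simp only [Set.mem_singleton_iff] at hk
      rw [Finsupp.single_apply, if_neg (fun h => hk h.symm)]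
      exact dvd_zero p
    · intro m hm k hk
      rw [MvPolynomial.X_pow_eq_monomial] at hm
      have hm' : m = Finsupp.single j p :=
        Finset.mem_singleton.mp (MvPolynomial.support_monomial_subset hm)
      subst hm'
      rw [Finsupp.single_apply]
      split <;> simp
  have := this hg
  intro m hm j hj
  exact this m hm j (by simpa using hj)

lemma mem_adjoin_of_dvd {p : ℕ} {g : MvPolynomial (Fin n) K}
    (h : ∀ m ∈ g.support, ∀ j, p ∣ m j) :
    g ∈ Algebra.adjoin K
      (Set.range fun j : Fin n => (MvPolynomial.X j : MvPolynomial (Fin n) K) ^ p) := by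
  classical
  rw [← MvPolynomial.support_sum_monomial_coeff g]
  refine Subalgebra.sum_mem _ fun m hm => ?_
  rw [MvPolynomial.monomial_eq]
  refine Subalgebra.mul_mem _ (Subalgebra.algebraMap_mem _ _) ?_
  refine Subalgebra.prod_mem _ fun j hj => ?_
  obtain ⟨k, hk⟩ := h m hm j
  show (MvPolynomial.X j : MvPolynomial (Fin n) K) ^ (m j) ∈ _
  rw [hk, pow_mul]
  exact Subalgebra.pow_mem _ (Algebra.subset_adjoin (Set.mem_range_self j)) k

lemma digits_inj {B : ℕ} (hB : 0 < B) :
    ∀ (N : ℕ) (a b : ℕ → ℕ), (∀ j, a j < B) → (∀ j, b j < B) →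
      (∑ j ∈ range N, a j * B ^ j) = (∑ j ∈ range N, b j * B ^ j) →
      ∀ j < N, a j = b j := by
  intro N
  induction N with
  | zero => intro a b _ _ _ j hj; omega
  | succ N ih =>
    intro a b ha hb hsum j hj
    rw [Finset.sum_range_succ', Finset.sum_range_succ'] at hsum
    simp only [pow_succ, pow_zero, one_mul] at hsum
    have h1 : (∑ i ∈ range N, a (i + 1) * (B ^ i * B)) = (∑ i ∈ range N, a (i + 1) * B ^ i) * B := by
      rw [Finset.sum_mul]; congr 1; ext i; ring
    have h2 : (∑ i ∈ range N, b (i + 1) * (B ^ i * B)) = (∑ i ∈ range N, b (i + 1) * B ^ i) * B := by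
      rw [Finset.sum_mul]; congr 1; ext i; ring
    rw [h1, h2] at hsum
    have h0 : a 0 = b 0 := by
      have := congrArg (· % B) hsum
      simp only [mul_one, add_comm _ (a 0), add_comm _ (b 0), Nat.add_mul_mod_self_right, Nat.mod_eq_of_lt (ha 0), Nat.mod_eq_of_lt (hb 0)] at this
      exact this
    have hrest : (∑ i ∈ range N, a (i + 1) * B ^ i) = ∑ i ∈ range N, b (i + 1) * B ^ i := by
      have : (∑ i ∈ range N, a (i + 1) * B ^ i) * B = (∑ i ∈ range N, b (i + 1) * B ^ i) * B := by
        omega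
      exact Nat.eq_of_mul_eq_mul_right hB this
    rcases j with _ | j
    · exact h0
    · exact ih (fun i => a (i + 1)) (fun i => b (i + 1)) (fun i => ha _) (fun i => hb _) hrest j
        (by omega)


theorem det_ne_zero {K : Type*} [Field K] {p : ℕ} (hp : p.Prime)
    (hK : ∀ z : ℤ, (z : K) = 0 → (p : ℤ) ∣ z)
    {n : ℕ} (f : Fin n → MvPolynomial (Fin n) K)
    (hsupp : ∀ i, ∀ m ∈ (f i).support, ∀ j, j ≠ i → p ∣ m j)
    (hgood : ∀ i, ∃ m ∈ (f i).support, ¬ p ∣ m i) :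
    (Matrix.of fun i j : Fin n => MvPolynomial.pderiv j (f i)).det ≠ 0 := by
  classical
  -- the bound B
  set B : ℕ := 1 + Finset.univ.sup
    (fun i : Fin n => (f i).support.sup fun m => Finset.univ.sup fun j => m j) with hBdef
  have hBpos : 0 < B := by omega
  have hB : ∀ i : Fin n, ∀ m ∈ (f i).support, ∀ j, m j < B := by
    intro i m hm j
    have h1 : m j ≤ Finset.univ.sup (fun j => m j) := Finset.le_sup (Finset.mem_univ j)
    have h2 : Finset.univ.sup (fun j => m j)
        ≤ (f i).support.sup (fun m => Finset.univ.sup fun j => m j) :=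
      Finset.le_sup (f := fun m => Finset.univ.sup fun j => m j) hm
    have h3 : (f i).support.sup (fun m => Finset.univ.sup fun j => m j)
        ≤ Finset.univ.sup
          (fun i : Fin n => (f i).support.sup fun m => Finset.univ.sup fun j => m j) :=
      Finset.le_sup (f := fun i : Fin n => (f i).support.sup fun m => Finset.univ.sup fun j => m j)
        (Finset.mem_univ i)
    omega
  -- the weight function
  set w : (Fin n →₀ ℕ) → ℕ := fun m => ∑ j : Fin n, m j * B ^ (j : ℕ) with hwdef
  have hw_inj : ∀ a b : Fin n →₀ ℕ, (∀ j, a j < B) → (∀ j, b j < B) → w a = w b → a = b := by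
    intro a b ha hb hw
    have hrw : ∀ c : Fin n →₀ ℕ,
        w c = ∑ k ∈ Finset.range n, (if h : k < n then c ⟨k, h⟩ else 0) * B ^ k := by
      intro c
      rw [hwdef]
      rw [← Fin.sum_univ_eq_sum_range (fun k => (if h : k < n then c ⟨k, h⟩ else 0) * B ^ k) n]
      exact Finset.sum_congr rfl fun j _ => by simp [j.isLt]
    rw [hrw a, hrw b] at hw
    have key := digits_inj hBpos n (fun k => if h : k < n then a ⟨k, h⟩ else 0)
      (fun k => if h : k < n then b ⟨k, h⟩ else 0)
      (fun k => by split <;> [exact ha _; exact hBpos])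
      (fun k => by split <;> [exact hb _; exact hBpos]) hw
    ext j
    have := key j j.isLt
    simpa [j.isLt] using this
  have hw_sum : ∀ (g : Fin n → (Fin n →₀ ℕ)), w (∑ i, g i) = ∑ i, w (g i) := by
    intro g
    rw [hwdef]
    simp only [Finsupp.finset_sum_apply, Finset.sum_mul]
    exact Finset.sum_comm
  -- choice of maximizers
  set G : Fin n → Finset (Fin n →₀ ℕ) :=
    fun i => (f i).support.filter (fun m => ¬ p ∣ m i) with hGdef
  have hGne : ∀ i, (G i).Nonempty := by
    intro i
    obtain ⟨m, hm, hmp⟩ := hgood i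
    exact ⟨m, Finset.mem_filter.mpr ⟨hm, hmp⟩⟩
  choose mstar hmem hmax using fun i => Finset.exists_max_image (G i) w (hGne i)
  have hms : ∀ i, mstar i ∈ (f i).support := fun i => (Finset.mem_filter.mp (hmem i)).1
  have hmp : ∀ i, ¬ p ∣ (mstar i) i := fun i => (Finset.mem_filter.mp (hmem i)).2
  have hm1 : ∀ i, 1 ≤ (mstar i) i := by
    intro i
    rcases Nat.eq_zero_or_pos ((mstar i) i) with h | h
    · exact absurd (h ▸ dvd_zero p) (hmp i)
    · exact h
  -- μ and T
  set one : Fin n →₀ ℕ := ∑ j : Fin n, Finsupp.single j 1 with honedef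
  have hone : ∀ j, one j = 1 := by
    intro j
    rw [honedef, Finsupp.finset_sum_apply]
    simp [Finsupp.single_apply]
  set T : Fin n →₀ ℕ := ∑ i, mstar i with hTdef
  have hT : ∀ j, T j = ∑ i, (mstar i) j := by
    intro j; rw [hTdef, Finsupp.finset_sum_apply]
  have hT1 : ∀ j, 1 ≤ T j := by
    intro j
    rw [hT]
    calc 1 ≤ (mstar j) j := hm1 j
    _ ≤ ∑ i, (mstar i) j := Finset.single_le_sum (f := fun i => (mstar i) j)
          (fun i _ => Nat.zero_le _) (Finset.mem_univ j)
  set μ : Fin n →₀ ℕ := T - one with hμdef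
  have hμone : μ + one = T := by
    ext j
    have := hT1 j
    simp only [hμdef, Finsupp.add_apply, Finsupp.tsub_apply, hone]
    omega
  have hμ : ∀ j, μ j = T j - 1 := by
    intro j; simp [hμdef, Finsupp.tsub_apply, hone]
  -- Claim A
  have claimA : ∀ σ : Equiv.Perm (Fin n), ∀ d ∈ Finset.univ.finsuppAntidiag μ,
      (∏ i : Fin n, coeff (d i) (pderiv i (f (σ i)))) ≠ 0 →
      ∀ i, d i + Finsupp.single i 1 = mstar (σ i) := by
    intro σ d hd hne
    set M : Fin n → (Fin n →₀ ℕ) := fun i => d i + Finsupp.single i 1 with hMdef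
    have hM : ∀ i, M i ∈ (f (σ i)).support := by
      intro i
      have h1 := Finset.prod_ne_zero_iff.mp hne i (Finset.mem_univ i)
      rw [coeff_pderiv] at h1
      exact MvPolynomial.mem_support_iff.mpr (left_ne_zero_of_mul h1)
    obtain ⟨hdsum, -⟩ := Finset.mem_finsuppAntidiag.mp hd
    have hsumM : ∑ i, M i = T := by
      rw [hMdef]
      rw [Finset.sum_add_distrib, hdsum, ← honedef, hμone]
    have hsumMj : ∀ j, ∑ i, (M i) j = T j := by
      intro j
      rw [← hsumM, Finsupp.finset_sum_apply]
    have hModp : ∀ j, ¬ p ∣ (M (σ.symm j)) j := by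
      intro j hdvd
      have hTj : p ∣ T j := by
        rw [← hsumMj j]
        refine Finset.dvd_sum fun i _ => ?_
        by_cases hij : i = σ.symm j
        · subst hij; exact hdvd
        · refine hsupp (σ i) (M i) (hM i) j (fun hji => hij ?_)
          rw [hji, Equiv.symm_apply_apply]
      have hrest : p ∣ ∑ i ∈ Finset.univ.erase j, (mstar i) j :=
        Finset.dvd_sum fun i hi => hsupp i (mstar i) (hms i) j
          (Ne.symm (Finset.ne_of_mem_erase hi))
      have hsplit : (mstar j) j + ∑ i ∈ Finset.univ.erase j, (mstar i) j = ∑ i, (mstar i) j :=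
        Finset.add_sum_erase _ (fun i => (mstar i) j) (Finset.mem_univ j)
      have : p ∣ (mstar j) j := by
        have h2 : p ∣ ∑ i, (mstar i) j := by rw [← hT]; exact hTj
        have h3 : (mstar j) j = (∑ i, (mstar i) j) - ∑ i ∈ Finset.univ.erase j, (mstar i) j := by
          omega
        rw [h3]
        exact Nat.dvd_sub h2 hrest
      exact hmp j this
    have hMG : ∀ j, M (σ.symm j) ∈ G j := by
      intro j
      refine Finset.mem_filter.mpr ⟨?_, hModp j⟩
      have := hM (σ.symm j)
      rwa [Equiv.apply_symm_apply] at this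
    have hwT : ∑ j, w (M (σ.symm j)) = ∑ j, w (mstar j) := by
      have e1 : ∑ j, w (M (σ.symm j)) = ∑ i, w (M i) := Equiv.sum_comp σ.symm (fun i => w (M i))
      rw [e1, ← hw_sum M, hsumM, hTdef, hw_sum]
    have heq : ∀ j, M (σ.symm j) = mstar j := by
      have hle : ∀ j ∈ Finset.univ, w (M (σ.symm j)) ≤ w (mstar j) :=
        fun j _ => hmax j _ (hMG j)
      have hall := (Finset.sum_eq_sum_iff_of_le hle).mp hwT
      intro j
      refine hw_inj _ _ (fun k => ?_) (fun k => hB j (mstar j) (hms j) k) (hall j (Finset.mem_univ j))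
      exact hB j _ (Finset.mem_filter.mp (hMG j)).1 k
    intro i
    have := heq (σ i)
    rwa [Equiv.symm_apply_apply] at this
  -- the key evaluation of each permutation term
  have key : ∀ σ : Equiv.Perm (Fin n),
      coeff μ (∏ i, pderiv i (f (σ i)))
        = (∏ k, coeff (mstar k) (f k)) * ∏ i, (((mstar (σ i)) i : K)) := by
    intro σ
    rw [coeff_prod]
    by_cases hc : ∀ i : Fin n, 1 ≤ (mstar (σ i)) i
    · set d0 : Fin n →₀ (Fin n →₀ ℕ) :=
        Finsupp.equivFunOnFinite.symm (fun i => mstar (σ i) - Finsupp.single i 1) with hd0def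
      have hd0app : ∀ i, d0 i = mstar (σ i) - Finsupp.single i 1 := fun i => rfl
      have hd0add : ∀ i, d0 i + Finsupp.single i 1 = mstar (σ i) := by
        intro i
        rw [hd0app]
        exact tsub_add_cancel_of_le (Finsupp.single_le_iff.mpr (hc i))
      have hd0mem : d0 ∈ Finset.univ.finsuppAntidiag μ := by
        refine Finset.mem_finsuppAntidiag.mpr ⟨?_, Finset.subset_univ _⟩
        have : ∑ i, (d0 i + Finsupp.single i 1) = ∑ i, mstar (σ i) :=
          Finset.sum_congr rfl fun i _ => hd0add i
        rw [Finset.sum_add_distrib, ← honedef] at this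
        have h2 : ∑ i, mstar (σ i) = T := by rw [hTdef]; exact Equiv.sum_comp σ mstar
        have h3 : (Finset.univ.sum ⇑d0) + one = T := by rw [this, h2]
        have h4 := hμone
        -- cancel `one`
        ext j
        have := congrArg (fun g : Fin n →₀ ℕ => g j) h3
        have h5 := congrArg (fun g : Fin n →₀ ℕ => g j) h4
        simp only [Finsupp.add_apply] at this h5
        omega
      rw [Finset.sum_eq_single d0]
      · have : ∀ i : Fin n, coeff (d0 i) (pderiv i (f (σ i)))
            = coeff (mstar (σ i)) (f (σ i)) * (((mstar (σ i)) i : K)) := by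
          intro i
          rw [coeff_pderiv, hd0add]
          congr 1
          have h6 : (d0 i) i + 1 = (mstar (σ i)) i := by
            have := congrArg (fun g : Fin n →₀ ℕ => g i) (hd0add i)
            simpa [Finsupp.add_apply] using this
          rw [← h6]
          push_cast
          ring
        rw [Finset.prod_congr rfl (fun i _ => this i), Finset.prod_mul_distrib]
        congr 1
        exact Equiv.prod_comp σ (fun k => coeff (mstar k) (f k))
      · intro d hd hne
        by_contra hne0
        have hAll := claimA σ d hd hne0
        apply hne
        ext i : 1
        have h7 := (hAll i).trans (hd0add i).symm
        exact add_right_cancel h7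
      · intro hnot
        exact absurd hd0mem hnot
    · push_neg at hc
      obtain ⟨i0, hi0⟩ := hc
      have hz : (mstar (σ i0)) i0 = 0 := by omega
      have hrhs : (∏ i, (((mstar (σ i)) i : K))) = 0 :=
        Finset.prod_eq_zero (Finset.mem_univ i0) (by rw [hz]; exact Nat.cast_zero)
      rw [hrhs, mul_zero]
      refine Finset.sum_eq_zero fun d hd => ?_
      by_contra hne0
      have := claimA σ d hd hne0 i0
      have := congrArg (fun g : Fin n →₀ ℕ => g i0) this
      simp only [Finsupp.add_apply, Finsupp.single_eq_same, hz] at this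
      omega
  -- assemble
  set Mint : Matrix (Fin n) (Fin n) ℤ := Matrix.of fun i j : Fin n => ((mstar i) j : ℤ)
    with hMintdef
  have hcoeffdet : coeff μ ((Matrix.of fun i j : Fin n => MvPolynomial.pderiv j (f i)).det)
      = (∏ k, coeff (mstar k) (f k)) * ((Mint.det : ℤ) : K) := by
    rw [Matrix.det_apply']
    rw [MvPolynomial.coeff_sum]
    have hterm : ∀ σ : Equiv.Perm (Fin n),
        coeff μ (((Equiv.Perm.sign σ : ℤ) : MvPolynomial (Fin n) K)
            * ∏ i, (Matrix.of fun i j : Fin n => MvPolynomial.pderiv j (f i)) (σ i) i)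
          = (∏ k, coeff (mstar k) (f k))
            * (((Equiv.Perm.sign σ : ℤ) : K) * ∏ i, (((mstar (σ i)) i : K))) := by
      intro σ
      have hcast : ((Equiv.Perm.sign σ : ℤ) : MvPolynomial (Fin n) K)
          = MvPolynomial.C ((Equiv.Perm.sign σ : ℤ) : K) := by
        rfl
      rw [hcast, MvPolynomial.coeff_C_mul]
      have : (∏ i, (Matrix.of fun i j : Fin n => MvPolynomial.pderiv j (f i)) (σ i) i)
          = ∏ i, pderiv i (f (σ i)) := rfl
      rw [this, key σ]
      ring
    rw [Finset.sum_congr rfl (fun σ _ => hterm σ), ← Finset.mul_sum]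
    congr 1
    have : ((Mint.det : ℤ) : K) = ((Mint.map (Int.cast : ℤ → K)).det) := by
      have h := RingHom.map_det (Int.castRingHom K) Mint
      simpa [RingHom.mapMatrix_apply] using h
    rw [this, Matrix.det_apply']
    refine Finset.sum_congr rfl fun σ _ => ?_
    congr 1
    refine Finset.prod_congr rfl fun i _ => ?_
    simp [hMintdef]
  -- Mint.det is not divisible by p
  have hdvd : ¬ ((p : ℤ) ∣ Mint.det) := by
    intro hdvd
    haveI := Fact.mk hp
    have h0 : ((Mint.det : ℤ) : ZMod p) = 0 := (ZMod.intCast_zmod_eq_zero_iff_dvd _ _).mpr hdvd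
    have h0' : ((Mint.map (Int.cast : ℤ → ZMod p)).det) = 0 := by
      rw [← h0]
      have h := RingHom.map_det (Int.castRingHom (ZMod p)) Mint
      simpa [RingHom.mapMatrix_apply] using h.symm
    have hdiag : Mint.map (Int.cast : ℤ → ZMod p)
        = Matrix.diagonal (fun i => (((mstar i) i : ℤ) : ZMod p)) := by
      ext i j
      by_cases hij : i = j
      · subst hij; simp [hMintdef]
      · rw [Matrix.diagonal_apply_ne _ hij]
        have hd : (p : ℕ) ∣ (mstar i) j := hsupp i (mstar i) (hms i) j (fun h => hij (h ▸ rfl))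
        simp only [Matrix.map_apply, hMintdef, Matrix.of_apply]
        rw [ZMod.intCast_zmod_eq_zero_iff_dvd]
        exact_mod_cast hd
    rw [hdiag, Matrix.det_diagonal] at h0'
    have : ∃ i ∈ Finset.univ, (((mstar i) i : ℤ) : ZMod p) = 0 := by
      by_contra hno
      push_neg at hno
      exact (Finset.prod_ne_zero_iff.mpr hno) h0'
    obtain ⟨i, -, hi⟩ := this
    rw [ZMod.intCast_zmod_eq_zero_iff_dvd] at hi
    exact hmp i (by exact_mod_cast hi)
  -- conclude
  intro hdet0
  have hcoeff0 := congrArg (coeff μ) hdet0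
  rw [hcoeffdet, MvPolynomial.coeff_zero] at hcoeff0
  rcases mul_eq_zero.mp hcoeff0 with h | h
  · obtain ⟨k, -, hk⟩ := Finset.prod_eq_zero_iff.mp h
    exact MvPolynomial.mem_support_iff.mp (hms k) hk
  · exact hdvd (hK _ h)
lemma pderiv_aeval_eq {L : Type*} [CommRing L] {n : ℕ} (f : Fin n → MvPolynomial (Fin n) L)
    (P : MvPolynomial (Fin n) L) (j : Fin n) :
    pderiv j (aeval f P) = ∑ k, aeval f (pderiv k P) * pderiv j (f k) := by
  classical
  induction P using MvPolynomial.induction_on with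
  | C a => simp
  | add P Q hP hQ =>
    simp only [map_add, hP, hQ, add_mul, Finset.sum_add_distrib]
  | mul_X P i hP =>
    have hk : ∀ k, aeval f (pderiv k (P * X i))
        = aeval f (pderiv k P) * f i + (if k = i then aeval f P else 0) := by
      intro k
      rw [pderiv_mul, map_add, map_mul, aeval_X, pderiv_X]
      congr 1
      by_cases h : k = i
      · subst h; simp
      · rw [if_neg h, Pi.single_eq_of_ne (fun he => h he.symm), mul_zero, map_zero]
    calc pderiv j (aeval f (P * X i))
        = pderiv j (aeval f P) * f i + aeval f P * pderiv j (f i) := by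
          rw [map_mul, aeval_X, pderiv_mul]
      _ = (∑ k, aeval f (pderiv k P) * pderiv j (f k)) * f i + aeval f P * pderiv j (f i) := by
          rw [hP]
      _ = (∑ k, aeval f (pderiv k P) * f i * pderiv j (f k))
            + ∑ k, (if k = i then aeval f P else 0) * pderiv j (f k) := by
          rw [Finset.sum_mul]
          congr 1
          · exact Finset.sum_congr rfl fun k _ => by ring
          · symm
            rw [show (∑ k, (if k = i then aeval f P else 0) * pderiv j (f k))
                = ∑ k, (if k = i then aeval f P * pderiv j (f k) else 0) from
              Finset.sum_congr rfl fun k _ => by split <;> simp]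
            rw [Finset.sum_ite_eq' Finset.univ i (fun k => aeval f P * pderiv j (f k)),
              if_pos (Finset.mem_univ i)]
      _ = ∑ k, aeval f (pderiv k (P * X i)) * pderiv j (f k) := by
          rw [← Finset.sum_add_distrib]
          exact Finset.sum_congr rfl fun k _ => by rw [hk k, add_mul]
lemma expand_char_mv {L : Type*} [Field L] (q : ℕ) [Fact q.Prime] [CharP L q]
    {n : ℕ} (g : MvPolynomial (Fin n) L) :
    MvPolynomial.map (frobenius L q) (MvPolynomial.expand q g) = g ^ q := by
  induction g using MvPolynomial.induction_on with
  | C a =>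
    rw [expand_C, map_C]
    rw [← C_pow]
    rfl
  | add P Q hP hQ =>
    rw [map_add, map_add, hP, hQ, add_pow_char]
  | mul_X P i hP =>
    rw [map_mul, expand_X, map_mul, map_pow, map_X, hP, mul_pow]

lemma indep_of_det_ne_zero {L : Type} [Field L] [PerfectField L] {n : ℕ}
    (f : Fin n → MvPolynomial (Fin n) L)
    (hdet : (Matrix.of fun i j : Fin n => MvPolynomial.pderiv j (f i)).det ≠ 0) :
    AlgebraicIndependent L f := by
  classical
  rw [algebraicIndependent_iff]
  suffices H : ∀ (N : ℕ) (P : MvPolynomial (Fin n) L), P.totalDegree ≤ N →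
      aeval f P = 0 → P = 0 from fun P hP => H P.totalDegree P le_rfl hP
  -- the constant case
  have hC : ∀ P : MvPolynomial (Fin n) L, P.totalDegree = 0 → aeval f P = 0 → P = 0 := by
    intro P hdeg h0
    have hm0 : ∀ m ∈ P.support, ∀ x, m x = 0 :=
      (MvPolynomial.totalDegree_eq_zero_iff _ P).mp hdeg
    have hPC : P = C (coeff 0 P) := by
      ext m
      rw [MvPolynomial.coeff_C]
      by_cases h : (0 : Fin n →₀ ℕ) = m
      · rw [if_pos h, ← h]
      · rw [if_neg h]
        by_contra hne
        exact h ((Finsupp.ext fun x => (hm0 m (MvPolynomial.mem_support_iff.mpr hne) x).trans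
          (Finsupp.zero_apply).symm).symm)
    rw [hPC, aeval_C] at h0
    have h0' : (algebraMap L (MvPolynomial (Fin n) L)) (coeff 0 P)
        = (algebraMap L (MvPolynomial (Fin n) L)) 0 := by rw [map_zero]; exact h0
    rw [hPC, (algebraMap L (MvPolynomial (Fin n) L)).injective h0', map_zero]
  -- the inductive step machinery: all first partials have zero aeval
  have hvec : ∀ P : MvPolynomial (Fin n) L, aeval f P = 0 →
      ∀ k, aeval f (pderiv k P) = 0 := by
    intro P h0 k
    have hφ : Function.Injective (algebraMap (MvPolynomial (Fin n) L)
        (FractionRing (MvPolynomial (Fin n) L))) :=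
      IsFractionRing.injective _ _
    set φ := algebraMap (MvPolynomial (Fin n) L) (FractionRing (MvPolynomial (Fin n) L))
      with hφdef
    set J : Matrix (Fin n) (Fin n) (MvPolynomial (Fin n) L) :=
      Matrix.of fun a b : Fin n => pderiv b (f a) with hJdef
    have hrel : ∀ j, ∑ l, aeval f (pderiv l P) * J l j = 0 := by
      intro j
      have h1 := pderiv_aeval_eq f P j
      rw [h0, map_zero] at h1
      exact h1.symm
    set v' : Fin n → FractionRing (MvPolynomial (Fin n) L) :=
      fun l => φ (aeval f (pderiv l P)) with hv'def
    have hv' : Matrix.vecMul v' (J.map φ) = 0 := by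
      ext j
      show ∑ l, v' l * (J.map φ) l j = 0
      have he : ∀ l, v' l * (J.map φ) l j = φ (aeval f (pderiv l P) * J l j) := by
        intro l
        rw [map_mul]
        rfl
      rw [Finset.sum_congr rfl fun l _ => he l, ← map_sum, hrel j, map_zero]
    have hdet' : IsUnit (J.map φ).det := by
      have h2 : (J.map φ).det = φ J.det := by
        have h := RingHom.map_det φ J
        simpa [RingHom.mapMatrix_apply] using h.symm
      rw [h2, isUnit_iff_ne_zero]
      intro h3
      exact hdet (hφ (h3.trans (map_zero φ).symm))
    have hv0 : v' = 0 := by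
      have h1 : Matrix.vecMul v' ((J.map φ) * (J.map φ)⁻¹) = v' := by
        rw [Matrix.mul_nonsing_inv _ hdet', Matrix.vecMul_one]
      rw [← Matrix.vecMul_vecMul, hv', Matrix.zero_vecMul] at h1
      exact h1.symm
    have h5 : φ (aeval f (pderiv k P)) = φ 0 := by
      rw [map_zero]
      exact congrFun hv0 k
    exact hφ h5
  -- degree of pderiv
  have hdegp : ∀ (P : MvPolynomial (Fin n) L) (k : Fin n) (N : ℕ), P.totalDegree ≤ N + 1 →
      (pderiv k P).totalDegree ≤ N := by
    intro P k N hdeg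
    rw [MvPolynomial.totalDegree]
    refine Finset.sup_le fun m hm => ?_
    have h1 : coeff m (pderiv k P) ≠ 0 := MvPolynomial.mem_support_iff.mp hm
    rw [coeff_pderiv] at h1
    have h2 : m + Finsupp.single k 1 ∈ P.support :=
      MvPolynomial.mem_support_iff.mpr (left_ne_zero_of_mul h1)
    have h3 := le_trans (MvPolynomial.le_totalDegree h2) hdeg
    have h4 : ((m + Finsupp.single k 1).sum fun _ e => e)
        = (m.sum fun _ e => e) + 1 := by
      rw [Finsupp.sum_add_index' (fun _ => rfl) (fun _ _ _ => rfl)]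
      rw [Finsupp.sum_single_index rfl]
    omega
  intro N
  induction N with
  | zero =>
    intro P hdeg h0
    exact hC P (Nat.le_zero.mp hdeg) h0
  | succ N ih =>
    intro P hdeg h0
    have hpd : ∀ k, pderiv k P = 0 :=
      fun k => ih (pderiv k P) (hdegp P k N hdeg) (hvec P h0 k)
    -- all exponents are divisible by the characteristic
    have hdvdm : ∀ m ∈ P.support, ∀ k : Fin n, (m k : L) = 0 ∨ m k = 0 := by
      intro m hm k
      rcases Nat.eq_zero_or_pos (m k) with h | h
      · exact Or.inr h
      · left
        have h1 : coeff (m - Finsupp.single k 1) (pderiv k P) = 0 := by rw [hpd k, coeff_zero]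
        rw [coeff_pderiv] at h1
        have h2 : m - Finsupp.single k 1 + Finsupp.single k 1 = m :=
          tsub_add_cancel_of_le (Finsupp.single_le_iff.mpr h)
        rw [h2] at h1
        rcases mul_eq_zero.mp h1 with h3 | h3
        · exact absurd h3 (MvPolynomial.mem_support_iff.mp hm)
        · have h4 : (m - Finsupp.single k 1 : Fin n →₀ ℕ) k + 1 = m k := by
            rw [Finsupp.tsub_apply, Finsupp.single_eq_same]
            omega
          rw [← h4]
          push_cast
          push_cast at h3
          exact h3
    rcases CharP.char_is_prime_or_zero L (ringChar L) with hq | hq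
    · -- positive characteristic
      set q := ringChar L with hqdef
      haveI : Fact q.Prime := Fact.mk hq
      haveI : CharP L q := ringChar.charP L
      haveI : ExpChar L q := ExpChar.prime hq
      have hdvd : ∀ m ∈ P.support, ∀ k : Fin n, q ∣ m k := by
        intro m hm k
        rcases hdvdm m hm k with h | h
        · exact (CharP.cast_eq_zero_iff L q _).mp h
        · simp [h]
      set md : (Fin n →₀ ℕ) → (Fin n →₀ ℕ) :=
        fun m => m.mapRange (· / q) (Nat.zero_div q) with hmddef
      set P0 : MvPolynomial (Fin n) L :=
        ∑ m ∈ P.support, monomial (md m) (coeff m P) with hP0def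
      have hexp : expand q P0 = P := by
        rw [hP0def, map_sum]
        conv_rhs => rw [← MvPolynomial.support_sum_monomial_coeff P]
        refine Finset.sum_congr rfl fun m hm => ?_
        have hqm : q • md m = m := by
          ext i
          rw [hmddef]
          simp only [Finsupp.smul_apply, smul_eq_mul, Finsupp.mapRange_apply]
          exact Nat.mul_div_cancel' (hdvd m hm i)
        rw [expand_monomial, hqm]
      set Q := MvPolynomial.map ((frobeniusEquiv L q).symm : L →+* L) P0 with hQdef
      have hfrob : Q ^ q = P :=
        calc Q ^ q = MvPolynomial.map (frobenius L q) (expand q Q) := (expand_char_mv q Q).symm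
        _ = MvPolynomial.map (frobenius L q)
              (MvPolynomial.map ((frobeniusEquiv L q).symm : L →+* L) (expand q P0)) := by
            rw [hQdef, ← MvPolynomial.map_expand]
        _ = MvPolynomial.map ((frobenius L q).comp ((frobeniusEquiv L q).symm : L →+* L))
              (expand q P0) := MvPolynomial.map_map _ _ _
        _ = P := by rw [frobenius_comp_frobeniusEquiv_symm, MvPolynomial.map_id, hexp]
      have hQ0 : aeval f Q = 0 := by
        have hpow : (aeval f Q) ^ q = 0 := by rw [← map_pow, hfrob, h0]
        exact (pow_eq_zero_iff hq.ne_zero).mp hpow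
      have hdegQ : Q.totalDegree ≤ N := by
        have h1 : Q.totalDegree ≤ P0.totalDegree :=
          Finset.sup_mono (MvPolynomial.support_map_subset _ _)
        refine le_trans h1 ?_
        rw [hP0def]
        refine le_trans (MvPolynomial.totalDegree_finset_sum _ _) ?_
        refine Finset.sup_le fun m hm => ?_
        refine le_trans (MvPolynomial.totalDegree_monomial_le _ _) ?_
        have hsm : ((md m).sum fun _ e => e) * q = m.sum fun _ e => e := by
          rw [hmddef, Finsupp.sum_mapRange_index (fun _ => rfl)]
          rw [Finsupp.sum, Finsupp.sum, Finset.sum_mul]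
          exact Finset.sum_congr rfl fun i _ => Nat.div_mul_cancel (hdvd m hm i)
        have hms : (m.sum fun _ e => e) ≤ N + 1 := le_trans (MvPolynomial.le_totalDegree hm) hdeg
        have hq2 : 2 ≤ q := hq.two_le
        have h2t : ((md m).sum fun _ e => e) * 2 ≤ ((md m).sum fun _ e => e) * q :=
          Nat.mul_le_mul_left _ hq2
        have hfin : ((md m).sum fun _ e => e) ≤ N := by omega
        exact hfin
      have hQzero : Q = 0 := ih Q hdegQ hQ0
      rw [← hfrob, hQzero, zero_pow hq.ne_zero]
    · -- characteristic zero
      haveI : CharP L 0 := hq ▸ ringChar.charP L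
      haveI : CharZero L := CharP.charP_to_charZero L
      refine hC P ?_ h0
      rw [MvPolynomial.totalDegree_eq_zero_iff]
      intro m hm k
      rcases hdvdm m hm k with h | h
      · exact_mod_cast h
      · exact h
end Stmt10

/-- Let `p` be a prime and `K` a field of characteristic `0` or `p`.
If each `fᵢ ∈ K[x₁,…,xₙ]` lies in `K[x₁ᵖ,…,x_{i-1}ᵖ, xᵢ, x_{i+1}ᵖ,…,xₙᵖ]` but not in
`K[x₁ᵖ,…,xₙᵖ]`, then the Jacobian determinant `det (∂fᵢ/∂xⱼ)` is nonzero; in particular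
`f₁,…,fₙ` are algebraically independent over `K`. -/
theorem jacobian_ne_zero_of_p_power_form (K : Type) [Field K] (p : ℕ) (hp : p.Prime)
    (hchar : ringChar K = 0 ∨ ringChar K = p)
    (n : ℕ) (f : Fin n → MvPolynomial (Fin n) K)
    (hmem : ∀ i, f i ∈ Algebra.adjoin K
      ({MvPolynomial.X i} ∪
        {q : MvPolynomial (Fin n) K | ∃ j, j ≠ i ∧ q = MvPolynomial.X j ^ p}))
    (hnot : ∀ i, f i ∉ Algebra.adjoin K
      (Set.range fun j : Fin n => (MvPolynomial.X j : MvPolynomial (Fin n) K) ^ p)) :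
    (Matrix.of fun i j : Fin n => MvPolynomial.pderiv j (f i)).det ≠ 0 ∧
    AlgebraicIndependent K f := by
  classical
  open MvPolynomial in
  have hK : ∀ z : ℤ, (z : K) = 0 → (p : ℤ) ∣ z := by
    intro z hz
    rcases hchar with h0 | hp'
    · haveI : CharP K 0 := h0 ▸ ringChar.charP K
      haveI : CharZero K := CharP.charP_to_charZero K
      rw [show z = 0 from by exact_mod_cast hz]
      exact dvd_zero _
    · haveI : CharP K p := hp' ▸ ringChar.charP K
      exact (CharP.intCast_eq_zero_iff K p z).mp hz
  have hsupp : ∀ i, ∀ m ∈ (f i).support, ∀ j, j ≠ i → p ∣ m j :=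
    fun i => Stmt10.support_dvd_of_mem_adjoin (hmem i)
  have hgood : ∀ i, ∃ m ∈ (f i).support, ¬ p ∣ m i := by
    intro i
    by_contra h
    push_neg at h
    refine hnot i (Stmt10.mem_adjoin_of_dvd (fun m hm j => ?_))
    by_cases hij : j = i
    · subst hij; exact h m hm
    · exact hsupp i m hm j hij
  have hdet := Stmt10.det_ne_zero hp hK f hsupp hgood
  refine ⟨hdet, ?_⟩
  -- pass to the algebraic closure, which is perfect
  set L := AlgebraicClosure K with hLdef
  set φ := algebraMap K L with hφdef
  have hφ : Function.Injective φ := φ.injective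
  set f' : Fin n → MvPolynomial (Fin n) L := fun i => MvPolynomial.map φ (f i) with hf'def
  have hdet' : (Matrix.of fun i j : Fin n => MvPolynomial.pderiv j (f' i)).det ≠ 0 := by
    have hmapJ : (Matrix.of fun i j : Fin n => MvPolynomial.pderiv j (f' i))
        = (Matrix.of fun i j : Fin n => MvPolynomial.pderiv j (f i)).map (MvPolynomial.map φ) := by
      refine Matrix.ext fun i j => ?_
      show MvPolynomial.pderiv j (MvPolynomial.map φ (f i))
        = MvPolynomial.map φ (MvPolynomial.pderiv j (f i))
      exact MvPolynomial.pderiv_map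
    rw [hmapJ]
    intro h
    apply hdet
    apply MvPolynomial.map_injective φ hφ
    rw [map_zero]
    have hh := RingHom.map_det (MvPolynomial.map φ)
      (Matrix.of fun i j : Fin n => MvPolynomial.pderiv j (f i))
    rw [← h]
    simpa [RingHom.mapMatrix_apply] using hh
  have hind' : AlgebraicIndependent L f' := Stmt10.indep_of_det_ne_zero f' hdet'
  rw [algebraicIndependent_iff]
  intro P hP
  have h1 : MvPolynomial.aeval f' (MvPolynomial.map φ P) = 0 := by
    have e1 : MvPolynomial.aeval f' (MvPolynomial.map φ P)
        = MvPolynomial.eval₂ ((algebraMap L (MvPolynomial (Fin n) L)).comp φ) f' P := by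
      rw [MvPolynomial.aeval_def, MvPolynomial.eval₂_map]
    have e2 : MvPolynomial.map φ (MvPolynomial.aeval f P)
        = MvPolynomial.eval₂ ((algebraMap L (MvPolynomial (Fin n) L)).comp φ) f' P := by
      rw [MvPolynomial.map_aeval]
      have hhom : (MvPolynomial.map φ).comp (algebraMap K (MvPolynomial (Fin n) K))
          = (algebraMap L (MvPolynomial (Fin n) L)).comp φ :=
        RingHom.ext fun a => by
          simp [MvPolynomial.algebraMap_eq, MvPolynomial.map_C]
      rw [show ((MvPolynomial.eval₂Hom ((MvPolynomial.map φ).comp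
            (algebraMap K (MvPolynomial (Fin n) K)))
            fun i => MvPolynomial.map φ (f i)) P)
          = MvPolynomial.eval₂ ((MvPolynomial.map φ).comp
            (algebraMap K (MvPolynomial (Fin n) K)))
            (fun i => MvPolynomial.map φ (f i)) P from rfl]
      rw [hhom]
    rw [e1, ← e2, hP, map_zero]
  have h2 := (algebraicIndependent_iff.mp hind') _ h1
  exact MvPolynomial.map_injective φ hφ (by rw [h2, map_zero])


end
end

section
/- Let W = W₁ ⊕ ⋯ ⊕ W_r be a faithful G-module with each W_i an irreducible G-module, and let φ = (φ₁, …, φ_r): V → W be a covariant, with components φ_i: V → W_i. If φ_i ≠ 0 for all i = 1, …, r, then φ is faithful. -/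
open MvPolynomial

noncomputable section

/-- The evaluation map `ℂⁿ → ℂᵐ` of an `m`-tuple of polynomials in `n` variables. -/
def polyMap {n m : ℕ} (p : Fin m → MvPolynomial (Fin n) ℂ) :
    (Fin n → ℂ) → Fin m → ℂ :=
  fun x i => MvPolynomial.eval x (p i)

/-- The linear action of `g : G` on `ℂᵐ` coming from a matrix representation `ρ`. -/
def matAct {G : Type*} [Group G] {m : ℕ} (ρ : G →* Matrix.GeneralLinearGroup (Fin m) ℂ)
    (g : G) (x : Fin m → ℂ) : Fin m → ℂ :=
  Matrix.mulVec (ρ g : Matrix (Fin m) (Fin m) ℂ) x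

/-- Equivariance of a map `ℂⁿ → ℂᵐ` with respect to representations `ρV`, `ρW`. -/
def IsEquivariant {G : Type*} [Group G] {n m : ℕ}
    (ρV : G →* Matrix.GeneralLinearGroup (Fin n) ℂ)
    (ρW : G →* Matrix.GeneralLinearGroup (Fin m) ℂ)
    (F : (Fin n → ℂ) → Fin m → ℂ) : Prop :=
  ∀ (g : G) (x : Fin n → ℂ), F (matAct ρV g x) = matAct ρW g (F x)

/-- `G` acts faithfully on the image of `F` (equivalently, on its Zariski closure). -/
def IsFaithfulOnImage {G : Type*} [Group G] {n m : ℕ}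
    (ρW : G →* Matrix.GeneralLinearGroup (Fin m) ℂ)
    (F : (Fin n → ℂ) → Fin m → ℂ) : Prop :=
  ∀ g : G, (∀ x : Fin n → ℂ, matAct ρW g (F x) = F x) → g = 1

/-- Dimension of the Zariski closure of a subset of `ℂᵐ`, as the Krull dimension of its
affine coordinate ring. -/
def zdim {m : ℕ} (S : Set (Fin m → ℂ)) : WithBot ℕ∞ :=
  ringKrullDim (MvPolynomial (Fin m) ℂ ⧸ MvPolynomial.vanishingIdeal ℂ S)

/-- The covariant dimension of a group `G`: the minimal dimension of the (closure of the)
image of a faithful polynomial covariant `φ : V → W` between `G`-modules. -/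
def covdim (G : Type*) [Group G] : WithBot ℕ∞ :=
  sInf { d : WithBot ℕ∞ | ∃ (n m : ℕ)
    (ρV : G →* Matrix.GeneralLinearGroup (Fin n) ℂ)
    (ρW : G →* Matrix.GeneralLinearGroup (Fin m) ℂ)
    (p : Fin m → MvPolynomial (Fin n) ℂ),
    IsEquivariant ρV ρW (polyMap p) ∧ IsFaithfulOnImage ρW (polyMap p) ∧
    d = zdim (Set.range (polyMap p)) }

/-- The rational map `ℂⁿ ⇢ ℂᵐ` with components `pᵢ / q`. -/
def ratMap {n m : ℕ} (p : Fin m → MvPolynomial (Fin n) ℂ) (q : MvPolynomial (Fin n) ℂ) :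
    (Fin n → ℂ) → Fin m → ℂ :=
  fun x i => MvPolynomial.eval x (p i) / MvPolynomial.eval x q

/-- The domain of definition of the rational map with denominator `q`. -/
def ratDomain {n : ℕ} (q : MvPolynomial (Fin n) ℂ) : Set (Fin n → ℂ) :=
  {x | MvPolynomial.eval x q ≠ 0}

/-- The essential dimension of a group `G`: the minimal dimension of the (closure of the)
image of a faithful rational covariant `φ : V ⇢ W` between `G`-modules. -/
def edim (G : Type*) [Group G] : WithBot ℕ∞ :=
  sInf { d : WithBot ℕ∞ | ∃ (n m : ℕ)
    (ρV : G →* Matrix.GeneralLinearGroup (Fin n) ℂ)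
    (ρW : G →* Matrix.GeneralLinearGroup (Fin m) ℂ)
    (p : Fin m → MvPolynomial (Fin n) ℂ) (q : MvPolynomial (Fin n) ℂ),
    q ≠ 0 ∧
    (∀ (g : G), ∀ x ∈ ratDomain q, matAct ρV g x ∈ ratDomain q →
      ratMap p q (matAct ρV g x) = matAct ρW g (ratMap p q x)) ∧
    (∀ g : G, (∀ x ∈ ratDomain q, matAct ρW g (ratMap p q x) = ratMap p q x) → g = 1) ∧
    d = zdim (ratMap p q '' ratDomain q) }

/-- Irreducibility of a matrix representation: the only invariant subspaces are `0` and
the whole space. -/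
def IsIrreducibleRep {G : Type*} [Group G] {m : ℕ}
    (ρ : G →* Matrix.GeneralLinearGroup (Fin m) ℂ) : Prop :=
  ∀ U : Submodule ℂ (Fin m → ℂ), (∀ g : G, ∀ x ∈ U, matAct ρ g x ∈ U) → U = ⊥ ∨ U = ⊤

/-- A group is faithful if it admits a faithful irreducible complex representation. -/
def IsFaithfulGroup (G : Type*) [Group G] : Prop :=
  ∃ (m : ℕ) (ρ : G →* Matrix.GeneralLinearGroup (Fin m) ℂ),
    0 < m ∧ Function.Injective ρ ∧ IsIrreducibleRep ρ

/-- `z_G(V)`: the number of scalar matrices contained in the image of `ρ`. -/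
def zscalar {G : Type*} [Group G] {m : ℕ}
    (ρ : G →* Matrix.GeneralLinearGroup (Fin m) ℂ) : ℕ :=
  Nat.card {M : Matrix (Fin m) (Fin m) ℂ //
    (∃ g : G, (ρ g : Matrix (Fin m) (Fin m) ℂ) = M) ∧
    ∃ c : ℂ, M = c • (1 : Matrix (Fin m) (Fin m) ℂ)}


/-- Let `W = W₁ ⊕ ⋯ ⊕ W_r` be a faithful `G`-module with each `Wᵢ`
irreducible and let `φ = (φ₁,…,φ_r) : V → W` be a covariant. If `φᵢ ≠ 0` for all `i`,
then `φ` is faithful (no nontrivial `g` fixes all points of the image of `φ`). -/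
theorem faithful_of_components_ne_zero (G : Type) [Group G] [Finite G] (n r : ℕ)
    (m : Fin r → ℕ)
    (ρV : G →* Matrix.GeneralLinearGroup (Fin n) ℂ)
    (ρW : (i : Fin r) → G →* Matrix.GeneralLinearGroup (Fin (m i)) ℂ)
    (hWfaithful : ∀ g : G, (∀ i, ρW i g = 1) → g = 1)
    (hirr : ∀ i, IsIrreducibleRep (ρW i))
    (p : (i : Fin r) → Fin (m i) → MvPolynomial (Fin n) ℂ)
    (hequiv : ∀ i, IsEquivariant ρV (ρW i) (polyMap (p i)))
    (hne : ∀ i, ∃ x : Fin n → ℂ, polyMap (p i) x ≠ 0) :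
    ∀ g : G, (∀ (i : Fin r) (x : Fin n → ℂ),
      matAct (ρW i) g (polyMap (p i) x) = polyMap (p i) x) → g = 1 := by
  intro g hg
  apply hWfaithful
  intro i
  set F := polyMap (p i) with hF
  set U : Submodule ℂ (Fin (m i) → ℂ) := Submodule.span ℂ (Set.range F) with hU
  have hinv : ∀ g' : G, ∀ x ∈ U, matAct (ρW i) g' x ∈ U := by
    intro g' x hx
    have hmap : Submodule.map
        (Matrix.mulVecLin ((ρW i g' : Matrix (Fin (m i)) (Fin (m i)) ℂ))) U ≤ U := by
      rw [hU, Submodule.map_span]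
      apply Submodule.span_le.2
      rintro _ ⟨_, ⟨y, rfl⟩, rfl⟩
      have h1 : Matrix.mulVecLin ((ρW i g' : Matrix (Fin (m i)) (Fin (m i)) ℂ)) (F y)
          = matAct (ρW i) g' (F y) := rfl
      rw [h1, ← hequiv i g' y]
      exact Submodule.subset_span ⟨matAct ρV g' y, rfl⟩
    exact hmap (Submodule.mem_map_of_mem hx)
  rcases hirr i U hinv with hbot | htop
  · exfalso
    obtain ⟨x, hx⟩ := hne i
    have : F x ∈ U := Submodule.subset_span ⟨x, rfl⟩
    rw [hbot, Submodule.mem_bot] at this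
    exact hx this
  · have hall : ∀ v, Matrix.mulVec ((ρW i g : Matrix (Fin (m i)) (Fin (m i)) ℂ)) v = v := by
      have hk : U ≤ LinearMap.ker
          (Matrix.mulVecLin ((ρW i g : Matrix (Fin (m i)) (Fin (m i)) ℂ)) - LinearMap.id) := by
        rw [hU]
        apply Submodule.span_le.2
        rintro _ ⟨y, rfl⟩
        have := hg i y
        simp only [SetLike.mem_coe, LinearMap.mem_ker, LinearMap.sub_apply, LinearMap.id_apply,
          sub_eq_zero]
        exact this
      intro v
      have hv : v ∈ U := htop ▸ Submodule.mem_top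
      have := hk hv
      rw [LinearMap.mem_ker, LinearMap.sub_apply, LinearMap.id_apply, sub_eq_zero] at this
      exact this
    have hmat : ((ρW i g : Matrix (Fin (m i)) (Fin (m i)) ℂ)) = 1 := by
      ext a b
      have := congrFun (hall (Pi.single b 1)) a
      simpa [Matrix.mulVec_single, Matrix.one_apply, Pi.single_apply, eq_comm] using this
    exact Units.ext hmat


end
end

section
/- Let V be a G-module and φ: V → V a nonzero homogeneous covariant of degree d. Then d ≡ 1 (mod z_G(V)). Consequently, every nonzero homogeneous component of any covariant φ: V → V has degree ≡ 1 (mod z_G(V)). -/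
open MvPolynomial

noncomputable section

lemma coeff_bind₁_scaleVars {n : ℕ} (c : ℂ) (P : MvPolynomial (Fin n) ℂ) (m : Fin n →₀ ℕ) :
    coeff m (bind₁ (fun k => C c * X k) P) = c ^ (m.degree) * coeff m P := by
  induction P using MvPolynomial.induction_on' with
  | add p q hp hq => simp [map_add, coeff_add, hp, hq, mul_add]
  | monomial d a =>
    rw [bind₁_monomial]
    have h1 : ∏ i ∈ d.support, (C c * X i : MvPolynomial (Fin n) ℂ) ^ d i
        = C (c ^ d.degree) * ∏ i ∈ d.support, (X i : MvPolynomial (Fin n) ℂ) ^ d i := by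
      simp_rw [mul_pow, Finset.prod_mul_distrib, ← C_pow, ← map_prod,
        Finset.prod_pow_eq_pow_sum, Finsupp.degree]
      rfl
    rw [h1, show (C a : MvPolynomial (Fin n) ℂ) * (C (c ^ d.degree) * ∏ i ∈ d.support, X i ^ d i)
        = C (c ^ d.degree) * (C a * ∏ i ∈ d.support, X i ^ d i) by ring,
      show (C a : MvPolynomial (Fin n) ℂ) * ∏ i ∈ d.support, X i ^ d i = monomial d a by
        rw [monomial_eq]; rfl]
    rw [coeff_C_mul, coeff_monomial]
    rcases eq_or_ne m d with rfl | hne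
    · simp
    · simp [hne, Ne.symm hne]

lemma pow_eq_of_scale {n : ℕ} (c : ℂ) (P : MvPolynomial (Fin n) ℂ) {j : ℕ}
    (hev : ∀ x, eval (c • x) P = c * eval x P)
    (hne : homogeneousComponent j P ≠ 0) : c ^ j = c := by
  have haev : ∀ (Q : MvPolynomial (Fin n) ℂ) (y : Fin n → ℂ), aeval y Q = eval y Q := by
    intro Q y; rw [aeval_def, Algebra.algebraMap_self]; rfl
  have hb : bind₁ (fun k => C c * X k) P = C c * P := by
    apply MvPolynomial.funext
    intro x
    have h2 := aeval_bind₁ (R := ℂ) (S := ℂ) x (fun k => C c * X k) P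
    simp only [haev] at h2
    have h3 : (fun i => eval x (C c * X i)) = c • x := by
      funext i; simp [smul_eq_mul]
    rw [h2, h3, hev, map_mul, eval_C]
  obtain ⟨m, hm⟩ := (MvPolynomial.support_nonempty.mpr hne)
  rw [mem_support_iff, coeff_homogeneousComponent] at hm
  split_ifs at hm with hd
  · have := congrArg (coeff m) hb
    rw [coeff_bind₁_scaleVars, coeff_C_mul, hd] at this
    exact mul_right_cancel₀ hm this
  · exact absurd rfl hm

def scalarSubgroup (G : Type*) [Group G] {n : ℕ}
    (ρ : G →* Matrix.GeneralLinearGroup (Fin n) ℂ) : Subgroup ℂˣ where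
  carrier := {c : ℂˣ | ∃ g : G, (ρ g : Matrix (Fin n) (Fin n) ℂ) = (c : ℂ) • 1}
  one_mem' := ⟨1, by simp⟩
  mul_mem' := by
    rintro a b ⟨g, hg⟩ ⟨h, hh⟩
    exact ⟨g * h, by
      rw [map_mul, Units.val_mul, hg, hh, smul_mul_smul_comm, one_mul, Units.val_mul]⟩
  inv_mem' := by
    rintro a ⟨g, hg⟩
    refine ⟨g⁻¹, ?_⟩
    have h1 : (ρ g⁻¹ : Matrix (Fin n) (Fin n) ℂ) * ((a : ℂ) • 1) = 1 := by
      rw [← hg, ← Units.val_mul, ← map_mul, inv_mul_cancel, map_one, Units.val_one]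
    have h2 : ((a : ℂ) • (1 : Matrix (Fin n) (Fin n) ℂ)) * (((a⁻¹ : ℂˣ) : ℂ) • 1) = 1 := by
      rw [smul_mul_smul_comm, one_mul, ← Units.val_mul, mul_inv_cancel, Units.val_one, one_smul]
    calc (ρ g⁻¹ : Matrix (Fin n) (Fin n) ℂ)
        = (ρ g⁻¹ : Matrix (Fin n) (Fin n) ℂ) * (((a : ℂ) • 1) * (((a⁻¹ : ℂˣ) : ℂ) • 1)) := by
          rw [h2, mul_one]
      _ = (((a⁻¹ : ℂˣ) : ℂ) • 1) := by rw [← mul_assoc, h1, one_mul]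

/-- If `φ : V → V` is a nonzero homogeneous covariant of degree `d`,
then `d ≡ 1 (mod z_G(V))`; consequently every nonzero homogeneous component of any
covariant `φ : V → V` has degree `≡ 1 (mod z_G(V))`. -/
theorem degree_covariant_mod_zscalar (G : Type) [Group G] [Finite G] (n : ℕ)
    (ρ : G →* Matrix.GeneralLinearGroup (Fin n) ℂ)
    (p : Fin n → MvPolynomial (Fin n) ℂ)
    (hequiv : IsEquivariant ρ ρ (polyMap p)) :
    (∀ d : ℕ, (∀ i, (p i).IsHomogeneous d) → (∃ i, p i ≠ 0) →
      d ≡ 1 [MOD zscalar ρ]) ∧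
    (∀ j : ℕ, (∃ i, MvPolynomial.homogeneousComponent j (p i) ≠ 0) →
      j ≡ 1 [MOD zscalar ρ]) := by
  suffices h2 : ∀ j : ℕ, (∃ i, MvPolynomial.homogeneousComponent j (p i) ≠ 0) →
      j ≡ 1 [MOD zscalar ρ] by
    refine ⟨?_, h2⟩
    rintro d hhom ⟨i, hi⟩
    refine h2 d ⟨i, ?_⟩
    rw [homogeneousComponent_of_mem ((mem_homogeneousSubmodule _ _).2 (hhom i)), if_pos rfl]
    exact hi
  rintro j ⟨i, hi⟩
  have key : ∀ c : ℂ, (∃ g : G, (ρ g : Matrix (Fin n) (Fin n) ℂ) = c • 1) → c ^ j = c := by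
    rintro c ⟨g, hg⟩
    refine pow_eq_of_scale c (p i) ?_ hi
    intro x
    have hx := hequiv g x
    unfold matAct at hx
    rw [hg] at hx
    simp only [Matrix.smul_mulVec, Matrix.one_mulVec] at hx
    have := congrFun hx i
    simpa [polyMap, Pi.smul_apply, smul_eq_mul] using this
  rcases Nat.eq_zero_or_pos n with hn | hn
  · subst hn
    have hz : zscalar ρ = 1 := by
      unfold zscalar
      haveI : Subsingleton (Matrix (Fin 0) (Fin 0) ℂ) :=
        ⟨fun a b => funext fun x => absurd x.2 (by simp)⟩
      haveI : Subsingleton {M : Matrix (Fin 0) (Fin 0) ℂ //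
          (∃ g : G, (ρ g : Matrix (Fin 0) (Fin 0) ℂ) = M) ∧
          ∃ c : ℂ, M = c • (1 : Matrix (Fin 0) (Fin 0) ℂ)} :=
        ⟨fun a b => Subtype.ext (Subsingleton.elim _ _)⟩
      letI : Unique {M : Matrix (Fin 0) (Fin 0) ℂ //
          (∃ g : G, (ρ g : Matrix (Fin 0) (Fin 0) ℂ) = M) ∧
          ∃ c : ℂ, M = c • (1 : Matrix (Fin 0) (Fin 0) ℂ)} :=
        uniqueOfSubsingleton ⟨1, ⟨1, by simp⟩, ⟨1, (one_smul _ _).symm⟩⟩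
      exact Nat.card_unique
    rw [hz]
    exact Nat.modEq_one
  · set H := scalarSubgroup G ρ with hH
    have i0 : Fin n := ⟨0, hn⟩
    set T := {M : Matrix (Fin n) (Fin n) ℂ //
      (∃ g : G, (ρ g : Matrix (Fin n) (Fin n) ℂ) = M) ∧
      ∃ c : ℂ, M = c • (1 : Matrix (Fin n) (Fin n) ℂ)} with hT
    let f : H → T := fun c => ⟨((c : ℂˣ) : ℂ) • 1, c.2, ⟨_, rfl⟩⟩
    have finj : Function.Injective f := by
      intro a b hab
      have h1 : ((a : ℂˣ) : ℂ) • (1 : Matrix (Fin n) (Fin n) ℂ)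
          = ((b : ℂˣ) : ℂ) • 1 := congrArg Subtype.val hab
      have h2 := congrFun (congrFun h1 i0) i0
      simp only [Matrix.smul_apply, Matrix.one_apply_eq, smul_eq_mul, mul_one] at h2
      exact Subtype.ext (Units.ext h2)
    have fsurj : Function.Surjective f := by
      rintro ⟨M, ⟨g, hg⟩, ⟨c, hc⟩⟩
      have hc0 : c ≠ 0 := by
        rintro rfl
        rw [zero_smul] at hc
        have h1 : (ρ g : Matrix (Fin n) (Fin n) ℂ) * (ρ g⁻¹ : Matrix (Fin n) (Fin n) ℂ) = 1 := by
          rw [← Units.val_mul, ← map_mul, mul_inv_cancel, map_one, Units.val_one]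
        rw [hg, hc, zero_mul] at h1
        have := congrFun (congrFun h1 i0) i0
        simp [Matrix.one_apply_eq] at this
      refine ⟨⟨Units.mk0 c hc0, ⟨g, by rw [hg, hc]; rfl⟩⟩, ?_⟩
      exact Subtype.ext (by simpa [f] using hc.symm)
    haveI : Finite T := by
      refine Finite.of_injective
        (fun M : T => (⟨M.1, M.2.1⟩ : Set.range fun g : G => (ρ g : Matrix (Fin n) (Fin n) ℂ)))
        ?_
      intro a b hab
      exact Subtype.ext (Subtype.mk_eq_mk.mp hab)
    haveI : Finite H := Finite.of_injective f finj
    have hcard : Nat.card H = zscalar ρ := by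
      unfold zscalar
      exact Nat.card_eq_of_bijective f ⟨finj, fsurj⟩
    obtain ⟨ζ, hζ⟩ := IsCyclic.exists_generator (α := H)
    have hord : orderOf ζ = Nat.card H := orderOf_eq_card_of_forall_mem_zpowers hζ
    have hz : ((ζ : ℂˣ) : ℂ) ^ j = ((ζ : ℂˣ) : ℂ) := key _ ζ.2
    have hpow : ζ ^ j = ζ ^ 1 := by
      apply Subtype.ext
      apply Units.ext
      push_cast
      rw [pow_one]
      exact hz
    have hmod := pow_eq_pow_iff_modEq.mp hpow
    rwa [hord, hcard] at hmod

end
end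

section
/- Let d, d₁, d₂, a₁, a₂ be natural numbers with d ≥ 1, d | d₁, d₁ | d₂, and such that every prime dividing d₂ also divides d (equivalently d₂ | d^N for N large). Then the equation (1 + a₁d)(1 + x·d₁) = (1 + a₂d)(1 + y·d₂) has a solution x, y ∈ ℕ if and only if a₁ ≡ a₂ (mod d₁/d). Moreover, when a solution exists, x and y can be chosen to be arbitrarily large. -/
private lemma aux_exists (d d₁ d₂ a₁ a₂ : ℕ) (hd : 1 ≤ d)
    (hdd₁ : d ∣ d₁) (hd₁d₂ : d₁ ∣ d₂)
    (hprimes : ∀ q : ℕ, q.Prime → q ∣ d₂ → q ∣ d)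
    (hcong : a₁ ≡ a₂ [MOD d₁ / d]) (N : ℕ) :
    ∃ x y : ℕ, N ≤ x ∧ N ≤ y ∧
      (1 + a₁ * d) * (1 + x * d₁) = (1 + a₂ * d) * (1 + y * d₂) := by
  set A := 1 + a₁ * d with hA
  set B := 1 + a₂ * d with hB
  have hApos : 0 < A := Nat.succ_le_iff.mp (Nat.le_add_right 1 _)
  -- d₂ ≠ 0
  have hd₂pos : 0 < d₂ := by
    rcases Nat.eq_zero_or_pos d₂ with h | h
    · obtain ⟨p, hpge, hp⟩ := Nat.exists_infinite_primes (d + 1)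
      have : p ∣ d := hprimes p hp (h ▸ dvd_zero p)
      have := Nat.le_of_dvd hd this
      omega
    · exact h
  have hd₁pos : 0 < d₁ := Nat.pos_of_dvd_of_pos hd₁d₂ hd₂pos
  -- coprimality
  have hcop : Nat.Coprime d₂ A := by
    by_contra hne
    obtain ⟨q, hq, hqg⟩ := Nat.exists_prime_and_dvd hne
    have hq₂ : q ∣ d₂ := hqg.trans (Nat.gcd_dvd_left _ _)
    have hqA : q ∣ A := hqg.trans (Nat.gcd_dvd_right _ _)
    have hqd : q ∣ a₁ * d := Dvd.dvd.mul_left (hprimes q hq hq₂) a₁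
    have : q ∣ 1 := by
      have h1 : q ∣ a₁ * d + 1 := by rw [hA] at hqA; rwa [add_comm] at hqA
      exact (Nat.dvd_add_right hqd).mp h1
    have h2 := Nat.le_of_dvd one_pos this
    have := hq.two_le
    omega
  have hcopd₁ : Nat.Coprime A d₁ := (Nat.Coprime.coprime_dvd_left hd₁d₂ hcop).symm
  -- base solution y₀ with A ∣ 1 + y₀ * d₂
  have hbase : ∃ y₀ : ℕ, A ∣ 1 + y₀ * d₂ := by
    rcases Nat.lt_or_ge 1 A with hA1 | hA1
    · obtain ⟨u, -, hu⟩ := Nat.exists_mul_mod_eq_one_of_coprime hcop hA1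
      refine ⟨u * (A - 1), ?_⟩
      have h1 : d₂ * u ≡ 1 [MOD A] := by
        unfold Nat.ModEq
        rw [hu, Nat.one_mod_eq_one.mpr (by omega)]
      have h2 : d₂ * u * (A - 1) ≡ 1 * (A - 1) [MOD A] := h1.mul_right _
      have h3 : 1 + d₂ * u * (A - 1) ≡ 1 + 1 * (A - 1) [MOD A] := h2.add_left 1
      have h5 : 1 + d₂ * u * (A - 1) ≡ 0 [MOD A] := by
        calc 1 + d₂ * u * (A - 1) ≡ 1 + 1 * (A - 1) [MOD A] := h3
        _ = A := by omega
        _ ≡ 0 [MOD A] := Nat.modEq_zero_iff_dvd.mpr dvd_rfl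
      have := Nat.modEq_zero_iff_dvd.mp h5
      convert this using 2
      ring
    · exact ⟨0, by simp [show A = 1 by omega]⟩
  obtain ⟨y₀, hy₀⟩ := hbase
  -- choose y large
  set M := A * (N * d₁ + 1) + N with hM
  set y := y₀ + M * A with hy
  have hyM : M ≤ y := by
    have : M ≤ M * A := Nat.le_mul_of_pos_right M hApos
    omega
  have hyN : N ≤ y := by omega
  have hdvd : A ∣ 1 + y * d₂ := by
    have : 1 + y * d₂ = (1 + y₀ * d₂) + M * d₂ * A := by ring
    rw [this]
    exact dvd_add hy₀ (Dvd.intro_left _ rfl)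
  obtain ⟨t, ht⟩ := hdvd
  have htlarge : N * d₁ + 1 < t := by
    have h1 : A * (N * d₁ + 1) < A * t := by
      have : 1 + y * d₂ ≥ 1 + M := by
        have : y ≤ y * d₂ := Nat.le_mul_of_pos_right y hd₂pos
        omega
      omega
    exact Nat.lt_of_mul_lt_mul_left h1
  set C := B * t with hC
  have htpos : 0 < t := by omega
  have hCt : t ≤ C := Nat.le_mul_of_pos_left t (by omega)
  -- C ≡ 1 [MOD d₁]
  have hAB : A ≡ B [MOD d₁] := by
    have h1 : a₁ * d ≡ a₂ * d [MOD (d₁ / d) * d] := hcong.mul_right' d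
    rw [Nat.div_mul_cancel hdd₁] at h1
    exact h1.add_left 1
  have hyd₂ : (1 + y * d₂ : ℕ) ≡ 1 [MOD d₁] := by
    have : d₁ ∣ y * d₂ := Dvd.dvd.mul_left hd₁d₂ y
    calc (1 + y * d₂ : ℕ) ≡ 1 + 0 [MOD d₁] := Nat.ModEq.add_left 1
          (Nat.modEq_zero_iff_dvd.mpr this)
    _ = 1 := by ring
  have hAC : A * C ≡ A * 1 [MOD d₁] := by
    calc A * C = B * (1 + y * d₂) := by rw [hC, ht]; ring
    _ ≡ B * 1 [MOD d₁] := hyd₂.mul_left B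
    _ = B := by ring
    _ ≡ A [MOD d₁] := hAB.symm
    _ = A * 1 := by ring
  have hC1 : C ≡ 1 [MOD d₁] := Nat.ModEq.cancel_left_of_coprime (by rwa [Nat.coprime_comm] at hcopd₁) hAC
  have hCge : N * d₁ + 1 ≤ C := by omega
  have hdvdC : d₁ ∣ C - 1 := (Nat.modEq_iff_dvd' (by omega)).mp hC1.symm
  set x := (C - 1) / d₁ with hx
  have hxd₁ : x * d₁ = C - 1 := Nat.div_mul_cancel hdvdC
  have hxN : N ≤ x := by
    rw [hx, Nat.le_div_iff_mul_le hd₁pos]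
    omega
  refine ⟨x, y, hxN, hyN, ?_⟩
  have h1x : 1 + x * d₁ = C := by omega
  rw [h1x, hC, ht]
  ring



/-- Let `d, d₁, d₂, a₁, a₂ ∈ ℕ` with `d ≥ 1`, `d ∣ d₁ ∣ d₂`, and every
prime dividing `d₂` divides `d`. Then `(1 + a₁d)(1 + x d₁) = (1 + a₂d)(1 + y d₂)` has a
solution `x, y ∈ ℕ` iff `a₁ ≡ a₂ (mod d₁/d)`; moreover, in that case `x` and `y` can be
chosen arbitrarily large. -/
theorem solvable_iff_congruent (d d₁ d₂ a₁ a₂ : ℕ) (hd : 1 ≤ d)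
    (hdd₁ : d ∣ d₁) (hd₁d₂ : d₁ ∣ d₂)
    (hprimes : ∀ q : ℕ, q.Prime → q ∣ d₂ → q ∣ d) :
    ((∃ x y : ℕ, (1 + a₁ * d) * (1 + x * d₁) = (1 + a₂ * d) * (1 + y * d₂)) ↔
      a₁ ≡ a₂ [MOD d₁ / d]) ∧
    (a₁ ≡ a₂ [MOD d₁ / d] → ∀ N : ℕ, ∃ x y : ℕ, N ≤ x ∧ N ≤ y ∧
      (1 + a₁ * d) * (1 + x * d₁) = (1 + a₂ * d) * (1 + y * d₂)) := by
  constructor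
  · constructor
    · rintro ⟨x, y, hxy⟩
      -- necessity
      have hAB : (1 + a₁ * d) ≡ (1 + a₂ * d) [MOD d₁] := by
        have h1 : (1 + a₁ * d) * (1 + x * d₁) ≡ (1 + a₁ * d) * 1 [MOD d₁] := by
          have : d₁ ∣ x * d₁ := Dvd.intro_left x rfl
          have h0 : (1 + x * d₁ : ℕ) ≡ 1 + 0 [MOD d₁] :=
            Nat.ModEq.add_left 1 (Nat.modEq_zero_iff_dvd.mpr this)
          simpa using h0.mul_left _
        have h2 : (1 + a₂ * d) * (1 + y * d₂) ≡ (1 + a₂ * d) * 1 [MOD d₁] := by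
          have : d₁ ∣ y * d₂ := Dvd.dvd.mul_left hd₁d₂ y
          have h0 : (1 + y * d₂ : ℕ) ≡ 1 + 0 [MOD d₁] :=
            Nat.ModEq.add_left 1 (Nat.modEq_zero_iff_dvd.mpr this)
          simpa using h0.mul_left _
        calc (1 + a₁ * d) ≡ (1 + a₁ * d) * (1 + x * d₁) [MOD d₁] := by simpa using h1.symm
        _ = (1 + a₂ * d) * (1 + y * d₂) := hxy
        _ ≡ (1 + a₂ * d) [MOD d₁] := by simpa using h2
      have h3 : a₁ * d ≡ a₂ * d [MOD d₁] := hAB.add_left_cancel' 1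
      have h4 : a₁ * d ≡ a₂ * d [MOD (d₁ / d) * d] := by
        rwa [Nat.div_mul_cancel hdd₁]
      exact h4.mul_right_cancel' (by omega)
    · intro h
      obtain ⟨x, y, _, _, hxy⟩ := aux_exists d d₁ d₂ a₁ a₂ hd hdd₁ hd₁d₂ hprimes h 0
      exact ⟨x, y, hxy⟩
  · exact fun h N => aux_exists d d₁ d₂ a₁ a₂ hd hdd₁ hd₁d₂ hprimes h N
end
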